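/- arXiv:1501.01549 — 2 statements merged into one kernel-verified Lean document; each statement's English description precedes it below -/
import Mathlib

section
/- Let P^{OT} be the pmf on {0,1}² × {0,1}² defined by P((x₀,x₁),(c,y)) = 1/8 if y = x_c and 0 otherwise (randomized 1-out-of-2 oblivious transfer of bits). Every regular embedding ψ_θ of P^{OT} satisfies S(tr_B|ψ_θ⟩⟨ψ_θ|) ≥ 3/2 and hence has leakage Δ(ψ_θ) ≥ 1/2; moreover the canonical embedding (θ ≡ 0) satisfies S(tr_B|ψ₀⟩⟨ψ₀|) = 3/2, so the leakage of the primitive P^{OT} equals 1/2 and is attained by the canonical embedding. -/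
open scoped BigOperators
open Matrix
open scoped ComplexOrder

noncomputable section

/-- Base-2 Shannon entropy of a finitely supported real function. -/
def shannonEntropy {α : Type*} [Fintype α] (p : α → ℝ) : ℝ :=
  -∑ x, p x * Real.logb 2 (p x)

/-- Von Neumann entropy: base-2 Shannon entropy of the eigenvalue multiset. -/
def vonNeumannEntropy {n : Type*} [Fintype n] [DecidableEq n] (ρ : Matrix n n ℂ) : ℝ :=
  if h : ρ.IsHermitian then shannonEntropy h.eigenvalues else 0

/-- Rank-one outer product `|φ⟩⟨φ|`. -/
def outer {n : Type*} (φ : n → ℂ) : Matrix n n ℂ :=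
  fun i j => φ i * (starRingEnd ℂ) (φ j)

/-- Partial trace over the first tensor factor (`tr_A`). -/
def trLeft {m n : Type*} [Fintype m] (ρ : Matrix (m × n) (m × n) ℂ) : Matrix n n ℂ :=
  fun i j => ∑ a, ρ (a, i) (a, j)

/-- Partial trace over the second tensor factor (`tr_B`). -/
def trRight {m n : Type*} [Fintype n] (ρ : Matrix (m × n) (m × n) ℂ) : Matrix m m ℂ :=
  fun i j => ∑ b, ρ (i, b) (j, b)

variable {𝒳 𝒴 : Type*} [Fintype 𝒳] [Fintype 𝒴] [DecidableEq 𝒳] [DecidableEq 𝒴]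

def margX (P : 𝒳 × 𝒴 → ℝ) (x : 𝒳) : ℝ := ∑ y, P (x, y)

def margY (P : 𝒳 × 𝒴 → ℝ) (y : 𝒴) : ℝ := ∑ x, P (x, y)

/-- Classical base-2 mutual information `I(X;Y) = H(X) + H(Y) − H(X,Y)`. -/
def mutualInfo (P : 𝒳 × 𝒴 → ℝ) : ℝ :=
  shannonEntropy (margX P) + shannonEntropy (margY P) - shannonEntropy P

/-- The regular embedding `|ψ_θ⟩ = Σ_{x,y} e^{iθ(x,y)} √P(x,y) |x⟩⊗|y⟩` of `P`. -/
def regEmbed (P : 𝒳 × 𝒴 → ℝ) (θ : 𝒳 × 𝒴 → ℝ) : 𝒳 × 𝒴 → ℂ :=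
  fun p => Complex.exp ((θ p : ℂ) * Complex.I) * (Real.sqrt (P p) : ℂ)

/-- The leakage `Δ(ψ_θ) = S(tr_A |ψ_θ⟩⟨ψ_θ|) − I(X;Y)` of a regular embedding. -/
def regLeakage (P : 𝒳 × 𝒴 → ℝ) (θ : 𝒳 × 𝒴 → ℝ) : ℝ :=
  vonNeumannEntropy (trLeft (outer (regEmbed P θ))) - mutualInfo P

/-- The leakage of the primitive `P`: minimal leakage over regular embeddings. -/
def primLeakage (P : 𝒳 × 𝒴 → ℝ) : ℝ := ⨅ θ : 𝒳 × 𝒴 → ℝ, regLeakage P θ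

/-- The randomized 1-out-of-2 OT primitive `P^{OT}` on `{0,1}² × {0,1}²`:
`P((x₀,x₁),(c,y)) = 1/8` if `y = x_c` and `0` otherwise. -/
def Pot : (Bool × Bool) × (Bool × Bool) → ℝ := fun p =>
  if p.2.2 = (if p.2.1 then p.1.2 else p.1.1) then 1 / 8 else 0


/-! ### Auxiliary machinery -/

section OTAux

open Polynomial

/-- similarity invariance of charpoly -/
lemma charpoly_similar {n : Type*} [Fintype n] [DecidableEq n]
    (M N B : Matrix n n ℂ) (h1 : B * M = 1) (h2 : M * B = 1) :
    (M * N * B).charpoly = N.charpoly := by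
  unfold Matrix.charpoly
  have hmap : ∀ A A' : Matrix n n ℂ, (A * A').map (C : ℂ →+* ℂ[X]) = A.map C * A'.map C := by
    intro A A'
    exact Matrix.map_mul
  have key : charmatrix (M * N * B) = (M.map C) * charmatrix N * (B.map C) := by
    unfold charmatrix
    rw [Matrix.mul_sub, Matrix.sub_mul]
    congr 1
    · rw [show M.map C * (Matrix.scalar n (X:ℂ[X])) = Matrix.scalar n X * M.map C from
        (Matrix.scalar_commute _ (fun r => Commute.all _ _) _).symm,
        Matrix.mul_assoc, ← hmap, h2]
      simp
    · simp only [RingHom.mapMatrix_apply]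
      rw [← hmap, ← hmap]
  rw [key, Matrix.det_mul, Matrix.det_mul, mul_comm, ← mul_assoc, ← Matrix.det_mul, ← hmap, h1]
  simp

lemma charpoly_diagonal' {n : Type*} [Fintype n] [DecidableEq n] (d : n → ℂ) :
    (Matrix.diagonal d).charpoly = ∏ i, (X - C (d i)) := by
  unfold Matrix.charpoly
  have : charmatrix (Matrix.diagonal d) = Matrix.diagonal (fun i => X - C (d i)) := by
    ext i j
    by_cases h : i = j
    · subst h; simp
    · simp [h, Matrix.diagonal_apply_ne _ h]
  rw [this, Matrix.det_diagonal]

lemma eig_multiset {n : Type*} [Fintype n] [DecidableEq n]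
    {ρ M B : Matrix n n ℂ} (hρ : ρ.IsHermitian) (p : n → ℝ)
    (h1 : B * M = 1) (h2 : M * B = 1)
    (hsim : ρ * M = M * Matrix.diagonal (fun i => (p i : ℂ))) :
    (Finset.univ.val.map fun i => ((hρ.eigenvalues i : ℝ) : ℂ))
      = Finset.univ.val.map (fun i => ((p i : ℝ) : ℂ)) := by
  have hρeq : ρ = M * Matrix.diagonal (fun i => (p i : ℂ)) * B := by
    rw [← hsim, Matrix.mul_assoc, h2, Matrix.mul_one]
  have hc1 : ρ.charpoly = (Matrix.diagonal (fun i => (p i : ℂ))).charpoly := by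
    rw [hρeq]; exact charpoly_similar _ _ _ h1 h2
  have hU := hρ.spectral_theorem
  have hc2 : ρ.charpoly =
      (Matrix.diagonal (RCLike.ofReal ∘ hρ.eigenvalues : n → ℂ)).charpoly := by
    conv_lhs => rw [hU]
    apply charpoly_similar
    · exact (Matrix.mem_unitaryGroup_iff').mp (hρ.eigenvectorUnitary).2
    · exact (Matrix.mem_unitaryGroup_iff).mp (hρ.eigenvectorUnitary).2
  have hprod : (∏ i, (X - C ((hρ.eigenvalues i : ℝ) : ℂ))) = ∏ i, (X - C ((p i : ℝ) : ℂ)) := by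
    have := hc2.symm.trans hc1
    rwa [charpoly_diagonal', charpoly_diagonal'] at this
  have key : ∀ f : n → ℂ, (∏ i, (X - C (f i))).roots = Finset.univ.val.map f := by
    intro f
    rw [Finset.prod_eq_multiset_prod]
    rw [show Multiset.map (fun i => X - C (f i)) Finset.univ.val
        = Multiset.map (fun a => X - C a) (Multiset.map f Finset.univ.val) from
      ((Multiset.map_map (fun a : ℂ => X - C a) f Finset.univ.val).symm)]
    exact Polynomial.roots_multiset_prod_X_sub_C _
  have := congrArg Polynomial.roots hprod
  rw [key, key] at this
  exact this

lemma vN_eq_aux {n : Type*} [Fintype n] [DecidableEq n]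
    {ρ M B : Matrix n n ℂ} (hρ : ρ.IsHermitian) (p : n → ℝ)
    (h1 : B * M = 1) (h2 : M * B = 1)
    (hsim : ρ * M = M * Matrix.diagonal (fun i => (p i : ℂ))) :
    shannonEntropy hρ.eigenvalues = shannonEntropy p := by
  have hms := eig_multiset hρ p h1 h2 hsim
  set f : ℂ → ℝ := fun z => z.re * Real.logb 2 z.re with hf
  have key : ∀ q : n → ℝ, (∑ i, q i * Real.logb 2 (q i))
      = ((Finset.univ.val.map fun i => ((q i : ℝ) : ℂ)).map f).sum := by
    intro q
    rw [Multiset.map_map]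
    rfl
  unfold shannonEntropy
  rw [key, key, hms]

/-! ### Exponential phases and the phased-cycle matrix -/

def E (x : ℝ) : ℂ := Complex.exp ((x:ℂ) * Complex.I)

lemma Emul (x y : ℝ) : E x * E y = E (x + y) := by
  rw [E, E, E, ← Complex.exp_add]; push_cast; ring_nf

lemma EArg {x y : ℝ} (h : x = y) : E x = E y := by rw [h]

lemma Econj (x : ℝ) : (starRingEnd ℂ) (E x) = E (-x) := by
  rw [E, E, ← Complex.exp_conj]
  congr 1
  simp [_root_.map_mul, Complex.conj_I, Complex.conj_ofReal]

lemma Ezero : E 0 = 1 := by simp [E]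

lemma E_re (x : ℝ) : (E x).re = Real.cos x := by
  simp [E, Complex.exp_mul_I, Complex.cos_ofReal_re, Complex.sin_ofReal_im, Complex.sin_ofReal_re]

lemma E_im (x : ℝ) : (E x).im = Real.sin x := by
  simp [E, Complex.exp_mul_I, Complex.cos_ofReal_im, Complex.sin_ofReal_re]

lemma Ene (x : ℝ) : E x ≠ 0 := Complex.exp_ne_zero _

def Rho (a b c d : ℝ) : Matrix (Fin 4) (Fin 4) ℂ :=
  !![1/4, E a / 8, 0, E (-d) / 8;
     E (-a) / 8, 1/4, E b / 8, 0;
     0, E (-b) / 8, 1/4, E c / 8;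
     E d / 8, 0, E (-c) / 8, 1/4]

def Dg (a b c t : ℝ) : Matrix (Fin 4) (Fin 4) ℂ :=
  diagonal ![1, E (-a+t), E (-a+-b+t+t), E (-a+-b+-c+t+t+t)]

def Cm (t : ℝ) : Matrix (Fin 4) (Fin 4) ℂ :=
  !![1/4, E t / 8, 0, E (-t) / 8;
     E (-t) / 8, 1/4, E t / 8, 0;
     0, E (-t) / 8, 1/4, E t / 8;
     E t / 8, 0, E (-t) / 8, 1/4]

def Fm : Matrix (Fin 4) (Fin 4) ℂ :=
  !![1, 1, 1, 1;
     1, Complex.I, -1, -Complex.I;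
     1, -1, 1, -1;
     1, -Complex.I, -1, Complex.I]

def pvec (t : ℝ) : Fin 4 → ℝ :=
  ![(1 + Real.cos t)/4, (1 - Real.sin t)/4, (1 - Real.cos t)/4, (1 + Real.sin t)/4]

lemma step1 (a b c t : ℝ) :
    Rho a b c (t+t+t+t-a-b-c) * Dg a b c t = Dg a b c t * Cm t := by
  ext j k
  fin_cases j <;> fin_cases k <;>
    simp [Rho, Dg, Cm, Matrix.mul_apply, Fin.sum_univ_four, diagonal, Emul]
  all_goals
    first
      | ring1
      | (field_simp; simp only [Emul]; exact EArg (by ring))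

lemma step2 (t : ℝ) : Cm t * Fm = Fm * diagonal (fun k => ((pvec t k : ℝ) : ℂ)) := by
  ext j k
  fin_cases j <;> fin_cases k <;>
  · simp [Cm, Fm, pvec, Matrix.mul_apply, Fin.sum_univ_four, diagonal]
    apply Complex.ext <;>
      simp [E_re, E_im, Complex.div_re, Complex.div_im, Real.cos_neg, Real.sin_neg,
        Complex.normSq, Complex.cos_ofReal_re, Complex.sin_ofReal_re] <;> ring

lemma RhoHerm (a b c d : ℝ) : (Rho a b c d).IsHermitian := by
  rw [Matrix.IsHermitian]
  ext j k
  rw [Matrix.conjTranspose_apply]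
  fin_cases j <;> fin_cases k <;>
    simp [Rho, Econj, Complex.conj_ofReal, map_div₀]

lemma FmDet : Fm.det ≠ 0 := by
  have : Fm.det = -16 * Complex.I := by
    rw [Matrix.det_succ_row_zero]
    simp [Fm, Fin.sum_univ_succ, Matrix.det_fin_three, Fin.succAbove]
    ring
  rw [this]
  simp [Complex.I_ne_zero]

lemma MDet (a b c t : ℝ) : IsUnit ((Dg a b c t * Fm).det) := by
  rw [Matrix.det_mul, Dg, Matrix.det_diagonal]
  apply IsUnit.mul
  · apply isUnit_iff_ne_zero.2
    rw [Fin.prod_univ_four]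
    simp only [Matrix.cons_val_zero, Matrix.cons_val_one]
    simp [Ene]
  · exact isUnit_iff_ne_zero.2 FmDet

lemma RhoEig (a b c t : ℝ) :
    Rho a b c (t+t+t+t-a-b-c) * (Dg a b c t * Fm)
      = (Dg a b c t * Fm) * diagonal (fun k => ((pvec t k : ℝ) : ℂ)) := by
  rw [← Matrix.mul_assoc, step1, Matrix.mul_assoc, step2, ← Matrix.mul_assoc]

lemma shannon_comp_equiv {ι : Type*} [Fintype ι] [DecidableEq ι] (e : ι ≃ Fin 4) (p : Fin 4 → ℝ) :
    shannonEntropy (p ∘ e) = shannonEntropy p := by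
  unfold shannonEntropy
  congr 1
  exact Fintype.sum_equiv e _ _ (fun i => rfl)

lemma masterSub {ι : Type*} [Fintype ι] [DecidableEq ι] (e : ι ≃ Fin 4) (a b c d t : ℝ)
    (hd : d = t+t+t+t-a-b-c)
    (A : Matrix ι ι ℂ) (hA : A = (Rho a b c d).submatrix e e) :
    vonNeumannEntropy A = shannonEntropy (pvec t) := by
  subst hd hA
  have hH : ((Rho a b c (t+t+t+t-a-b-c)).submatrix e e).IsHermitian := by
    have h0 := RhoHerm a b c (t+t+t+t-a-b-c)
    rw [Matrix.IsHermitian] at h0 ⊢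
    rw [Matrix.conjTranspose_submatrix, h0]
  rw [vonNeumannEntropy, dif_pos hH]
  rw [← shannon_comp_equiv e (pvec t)]
  set M := Dg a b c t * Fm with hM
  have hdet := MDet a b c t
  apply vN_eq_aux hH (pvec t ∘ e) (M := M.submatrix e e) (B := (M⁻¹).submatrix e e)
  · rw [Matrix.submatrix_mul_equiv, Matrix.nonsing_inv_mul _ hdet, Matrix.submatrix_one_equiv]
  · rw [Matrix.submatrix_mul_equiv, Matrix.mul_nonsing_inv _ hdet, Matrix.submatrix_one_equiv]
  · rw [Matrix.submatrix_mul_equiv, RhoEig, ← Matrix.submatrix_mul_equiv (e₂ := e),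
      Matrix.submatrix_diagonal_equiv]
    rfl

/-! ### The analytic inequality -/

private def gfun (c : ℝ) : ℝ := 2*Real.log 2*c^2 - (1+c)*Real.log (1+c) - (1-c)*Real.log (1-c)
private def gder (c : ℝ) : ℝ := 4*Real.log 2*c - Real.log (1+c) + Real.log (1-c)

lemma L_half : 1/2 < Real.log 2 := by
  have := Real.log_two_gt_d9; linarith

lemma gfun_cont : Continuous gfun := by
  have h1 : Continuous fun c : ℝ => (1+c)*Real.log (1+c) :=
    Real.continuous_mul_log.comp (continuous_const.add continuous_id)
  have h2 : Continuous fun c : ℝ => (1-c)*Real.log (1-c) :=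
    Real.continuous_mul_log.comp (continuous_const.sub continuous_id)
  exact ((continuous_const.mul (continuous_pow 2)).sub h1).sub h2

lemma hasDeriv_g {c : ℝ} (h1 : -1 < c) (h2 : c < 1) : HasDerivAt gfun (gder c) c := by
  have hp : (1:ℝ)+c ≠ 0 := by linarith
  have hm : (1:ℝ)-c ≠ 0 := by linarith
  have d1 : HasDerivAt (fun c : ℝ => (1+c)*Real.log (1+c)) (Real.log (1+c) + 1) c := by
    have hinner : HasDerivAt (fun c : ℝ => 1+c) 1 c := by
      simpa using (hasDerivAt_id c).const_add 1
    have hlog : HasDerivAt (fun c : ℝ => Real.log (1+c)) (1/(1+c)) c := by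
      simpa [Function.comp_def] using (Real.hasDerivAt_log hp).comp c hinner
    have := hinner.mul hlog
    refine this.congr_deriv ?_
    field_simp
  have d2 : HasDerivAt (fun c : ℝ => (1-c)*Real.log (1-c)) (-Real.log (1-c) - 1) c := by
    have hinner : HasDerivAt (fun c : ℝ => 1-c) (-1) c := by
      simpa using (hasDerivAt_id c).const_sub 1
    have hlog : HasDerivAt (fun c : ℝ => Real.log (1-c)) (-(1-c)⁻¹) c := by
      have := (Real.hasDerivAt_log hm).comp c hinner
      simpa [Function.comp_def] using this
    have := hinner.mul hlog
    refine this.congr_deriv ?_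
    field_simp
    ring
  have d0 : HasDerivAt (fun c : ℝ => 2*Real.log 2*c^2) (4*Real.log 2*c) c := by
    have := (hasDerivAt_pow 2 c).const_mul (2*Real.log 2)
    exact this.congr_deriv (by ring)
  have := (d0.sub d1).sub d2
  refine this.congr_deriv ?_
  unfold gder
  ring

lemma hasDeriv_gder {c : ℝ} (h1 : -1 < c) (h2 : c < 1) :
    HasDerivAt gder (4*Real.log 2 - 1/(1+c) - 1/(1-c)) c := by
  have hp : (1:ℝ)+c ≠ 0 := by linarith
  have hm : (1:ℝ)-c ≠ 0 := by linarith
  have hinner : HasDerivAt (fun c : ℝ => 1+c) 1 c := by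
    simpa using (hasDerivAt_id c).const_add 1
  have hlog : HasDerivAt (fun c : ℝ => Real.log (1+c)) (1/(1+c)) c := by
    simpa [Function.comp_def] using (Real.hasDerivAt_log hp).comp c hinner
  have hinner2 : HasDerivAt (fun c : ℝ => 1-c) (-1) c := by
    simpa using (hasDerivAt_id c).const_sub 1
  have hlog2 : HasDerivAt (fun c : ℝ => Real.log (1-c)) (-(1-c)⁻¹) c := by
    have := (Real.hasDerivAt_log hm).comp c hinner2
    simpa [Function.comp_def] using this
  have d0 : HasDerivAt (fun c : ℝ => 4*Real.log 2*c) (4*Real.log 2) c := by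
    simpa using (hasDerivAt_id c).const_mul (4*Real.log 2)
  have := (d0.sub hlog).add hlog2
  refine this.congr_deriv ?_
  ring

lemma gfun_nonneg : ∀ c ∈ Set.Icc (0:ℝ) 1, 0 ≤ gfun c := by
  have hL : 1/2 < Real.log 2 := L_half
  set L := Real.log 2 with hLdef
  set c₀ := Real.sqrt (1 - 1/(2*L)) with hc₀def
  have harg0 : 0 < 1 - 1/(2*L) := by
    have h1 : 1/(2*L) < 1 := by rw [div_lt_one (by linarith)]; linarith
    linarith
  have hc₀sq : c₀^2 = 1 - 1/(2*L) := Real.sq_sqrt harg0.le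
  have hc₀pos : 0 < c₀ := Real.sqrt_pos.2 harg0
  have hc₀lt1 : c₀ < 1 := by
    have h2 : c₀^2 < 1 := by
      rw [hc₀sq]
      have : 0 < 1/(2*L) := by positivity
      linarith
    nlinarith
  have hg'mono : MonotoneOn gder (Set.Icc 0 c₀) := by
    apply monotoneOn_of_deriv_nonneg (convex_Icc _ _)
    · intro x hx
      exact (hasDeriv_gder (by linarith [hx.1]) (by linarith [hx.2])).continuousAt.continuousWithinAt
    · intro x hx
      rw [interior_Icc] at hx
      exact (hasDeriv_gder (by linarith [hx.1]) (by linarith [hx.2])).differentiableAt.differentiableWithinAt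
    · intro x hx
      rw [interior_Icc] at hx
      have hx1 : x < 1 := by linarith [hx.2]
      rw [(hasDeriv_gder (by linarith [hx.1]) hx1).deriv]
      have hxx : x^2 < 1 - 1/(2*L) := by
        rw [← hc₀sq]; nlinarith [hx.1, hx.2, hc₀pos]
      have h1 : 0 < 1 - x^2 := by nlinarith
      have h1p : (0:ℝ) < 1 + x := by linarith [hx.1]
      have h1m : (0:ℝ) < 1 - x := by linarith
      have hsum : 1/(1+x) + 1/(1-x) = 2/(1-x^2) := by
        field_simp
        ring
      have h3 : 2/(1-x^2) < 4*L := by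
        rw [div_lt_iff₀ h1]
        have h2 : 1/(2*L) < 1 - x^2 := by linarith [hxx]
        have := mul_lt_mul_of_pos_right h2 (show (0:ℝ) < 2*L by linarith)
        rw [one_div, inv_mul_cancel₀ (by linarith : (2*L) ≠ 0)] at this
        nlinarith
      have := hsum
      linarith
  have hg'nonneg : ∀ x ∈ Set.Icc (0:ℝ) c₀, 0 ≤ gder x := by
    intro x hx
    have h0 : gder 0 = 0 := by simp [gder]
    have := hg'mono (Set.left_mem_Icc.2 hc₀pos.le) hx hx.1
    rw [h0] at this
    exact this
  have hgmono : MonotoneOn gfun (Set.Icc 0 c₀) := by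
    apply monotoneOn_of_deriv_nonneg (convex_Icc _ _) gfun_cont.continuousOn
    · intro x hx
      rw [interior_Icc] at hx
      exact (hasDeriv_g (by linarith [hx.1]) (by linarith [hx.2])).differentiableAt.differentiableWithinAt
    · intro x hx
      rw [interior_Icc] at hx
      rw [(hasDeriv_g (by linarith [hx.1]) (by linarith [hx.2])).deriv]
      exact hg'nonneg x ⟨hx.1.le, hx.2.le⟩
  have hg0 : gfun 0 = 0 := by simp [gfun]
  have hgc₀ : 0 ≤ gfun c₀ := by
    have := hgmono (Set.left_mem_Icc.2 hc₀pos.le) (Set.right_mem_Icc.2 hc₀pos.le) hc₀pos.le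
    rw [hg0] at this
    exact this
  have hg1 : gfun 1 = 0 := by
    norm_num [gfun]
  have hconc : ConcaveOn ℝ (Set.Icc c₀ 1) gfun := by
    apply concaveOn_of_hasDerivWithinAt2_nonpos (convex_Icc _ _) gfun_cont.continuousOn
      (f' := gder) (f'' := fun x => 4*L - 1/(1+x) - 1/(1-x))
    · intro x hx
      rw [interior_Icc] at hx
      exact (hasDeriv_g (by linarith [hx.1, hc₀pos]) hx.2).hasDerivWithinAt
    · intro x hx
      rw [interior_Icc] at hx
      exact (hasDeriv_gder (by linarith [hx.1, hc₀pos]) hx.2).hasDerivWithinAt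
    · intro x hx
      rw [interior_Icc] at hx
      have hxpos : 0 < x := lt_trans hc₀pos hx.1
      have hx1 : x < 1 := hx.2
      have h1p : (0:ℝ) < 1 + x := by linarith
      have h1m : (0:ℝ) < 1 - x := by linarith
      have h1 : 0 < 1 - x^2 := by nlinarith
      have hxx : 1 - 1/(2*L) < x^2 := by
        rw [← hc₀sq]; nlinarith [hx.1, hc₀pos]
      have hsum : 1/(1+x) + 1/(1-x) = 2/(1-x^2) := by
        field_simp
        ring
      have h3 : 4*L ≤ 2/(1-x^2) := by
        rw [le_div_iff₀ h1]
        have h2 : 1 - x^2 < 1/(2*L) := by linarith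
        have := mul_lt_mul_of_pos_right h2 (show (0:ℝ) < 2*L by linarith)
        rw [one_div, inv_mul_cancel₀ (by linarith : (2*L) ≠ 0)] at this
        nlinarith
      show 4*L - 1/(1+x) - 1/(1-x) ≤ 0
      linarith
  intro c hc
  rcases le_total c c₀ with h | h
  · have := hgmono (Set.left_mem_Icc.2 hc₀pos.le) ⟨hc.1, h⟩ hc.1
    rw [hg0] at this
    exact this
  · have hc₀mem : c₀ ∈ Set.Icc c₀ 1 := ⟨le_refl _, hc₀lt1.le⟩
    have h1mem : (1:ℝ) ∈ Set.Icc c₀ 1 := ⟨hc₀lt1.le, le_refl _⟩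
    have hden : 0 < 1 - c₀ := by linarith
    have ha : 0 ≤ (1 - c)/(1 - c₀) := div_nonneg (by linarith [hc.2]) hden.le
    have hb : 0 ≤ (c - c₀)/(1 - c₀) := div_nonneg (by linarith) hden.le
    have hab : (1 - c)/(1 - c₀) + (c - c₀)/(1 - c₀) = 1 := by
      field_simp
      ring
    have := hconc.2 hc₀mem h1mem ha hb hab
    have hcomb : ((1 - c)/(1 - c₀)) • c₀ + ((c - c₀)/(1 - c₀)) • (1:ℝ) = c := by
      rw [smul_eq_mul, smul_eq_mul]
      field_simp
      ring
    rw [hcomb] at this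
    rw [smul_eq_mul, smul_eq_mul, hg1] at this
    nlinarith [mul_nonneg ha hgc₀]

lemma keyB : ∀ c ∈ Set.Icc (0:ℝ) 1,
    (1+c)*Real.log (1+c) + (1-c)*Real.log (1-c) ≤ 2*Real.log 2*c^2 := by
  intro c hc
  have := gfun_nonneg c hc
  unfold gfun at this
  linarith

lemma log2_pos : 0 < Real.log 2 := Real.log_pos one_lt_two

lemma logb_half : Real.logb 2 (1/2 : ℝ) = -1 := by
  rw [show (1/2:ℝ) = ((2:ℝ)^(1:ℕ))⁻¹ by norm_num, Real.logb, Real.log_inv, Real.log_pow]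
  field_simp
  norm_num

lemma logb_quarter : Real.logb 2 (1/4 : ℝ) = -2 := by
  rw [show (1/4:ℝ) = ((2:ℝ)^(2:ℕ))⁻¹ by norm_num, Real.logb, Real.log_inv, Real.log_pow]
  field_simp
  norm_num

lemma logb_eighth : Real.logb 2 (1/8 : ℝ) = -3 := by
  rw [show (1/8:ℝ) = ((2:ℝ)^(3:ℕ))⁻¹ by norm_num, Real.logb, Real.log_inv, Real.log_pow]
  field_simp
  norm_num

lemma logb_four : Real.logb 2 (4:ℝ) = 2 := by
  rw [show (4:ℝ) = (2:ℝ)^(2:ℕ) by norm_num, Real.logb, Real.log_pow]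
  field_simp
  norm_num

lemma logb_eight : Real.logb 2 (8:ℝ) = 3 := by
  rw [show (8:ℝ) = (2:ℝ)^(3:ℕ) by norm_num, Real.logb, Real.log_pow]
  field_simp
  norm_num

noncomputable def Hc (c : ℝ) : ℝ :=
  -((1+c)/4 * Real.logb 2 ((1+c)/4)) - ((1-c)/4 * Real.logb 2 ((1-c)/4))

lemma Hc_symm (c : ℝ) : Hc (-c) = Hc c := by
  unfold Hc
  rw [show (1:ℝ) + -c = 1 - c by ring, show (1:ℝ) - -c = 1 + c by ring]
  ring

lemma Hc_one : Hc 1 = 1/2 := by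
  unfold Hc
  norm_num [logb_half]

lemma Hc_zero : Hc 0 = 1 := by
  unfold Hc
  norm_num [logb_quarter]

lemma Hc_bound_nonneg (c : ℝ) (h0 : 0 ≤ c) (h1 : c ≤ 1) : 1 - c^2/2 ≤ Hc c := by
  rcases eq_or_lt_of_le h1 with rfl | hlt
  · rw [Hc_one]; norm_num
  · have hp : (0:ℝ) < 1 + c := by linarith
    have hm : (0:ℝ) < 1 - c := by linarith
    have hL := log2_pos
    have e1 : Real.logb 2 ((1+c)/4) = (Real.log (1+c) - 2*Real.log 2)/Real.log 2 := by
      rw [Real.logb, Real.log_div hp.ne' (by norm_num), show (4:ℝ) = 2^2 by norm_num,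
        Real.log_pow]
      push_cast
      ring
    have e2 : Real.logb 2 ((1-c)/4) = (Real.log (1-c) - 2*Real.log 2)/Real.log 2 := by
      rw [Real.logb, Real.log_div hm.ne' (by norm_num), show (4:ℝ) = 2^2 by norm_num,
        Real.log_pow]
      push_cast
      ring
    have key : Hc c = 1 - ((1+c)*Real.log (1+c) + (1-c)*Real.log (1-c))/(4*Real.log 2) := by
      unfold Hc
      rw [e1, e2]
      field_simp
      ring
    rw [key]
    have hB := keyB c ⟨h0, h1⟩
    have hdiv : ((1+c)*Real.log (1+c) + (1-c)*Real.log (1-c))/(4*Real.log 2)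
        ≤ (2*Real.log 2*c^2)/(4*Real.log 2) :=
      div_le_div_of_nonneg_right hB (by linarith)
    have hval : (2*Real.log 2*c^2)/(4*Real.log 2) = c^2/2 := by
      field_simp
      ring
    rw [hval] at hdiv
    linarith

lemma Hc_bound (c : ℝ) (h : |c| ≤ 1) : 1 - c^2/2 ≤ Hc c := by
  rcases le_total 0 c with h0 | h0
  · exact Hc_bound_nonneg c h0 (le_of_abs_le h)
  · have := Hc_bound_nonneg (-c) (by linarith) (by rw [abs_le] at h; linarith)
    rw [Hc_symm] at this
    calc 1 - c^2/2 = 1 - (-c)^2/2 := by ring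
    _ ≤ Hc c := this

lemma entropy_pair (t : ℝ) : 3/2 ≤ Hc (Real.cos t) + Hc (Real.sin t) := by
  have h1 := Hc_bound (Real.cos t) (Real.abs_cos_le_one t)
  have h2 := Hc_bound (Real.sin t) (Real.abs_sin_le_one t)
  have h3 := Real.sin_sq_add_cos_sq t
  nlinarith


/-! ### Entropy of the eigenvalue vector -/

lemma shannon_pvec (t : ℝ) : shannonEntropy (pvec t) = Hc (Real.cos t) + Hc (Real.sin t) := by
  simp only [shannonEntropy, pvec, Fin.sum_univ_four, Hc, Matrix.cons_val_zero,
    Matrix.cons_val_one, Matrix.head_cons, Matrix.cons_val_two, Matrix.tail_cons,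
    Matrix.cons_val_three]
  ring

lemma pvec_bound (t : ℝ) : 3/2 ≤ shannonEntropy (pvec t) := by
  rw [shannon_pvec]
  exact entropy_pair t

lemma pvec_zero : shannonEntropy (pvec 0) = 3/2 := by
  rw [shannon_pvec]
  rw [Real.cos_zero, Real.sin_zero, Hc_one, Hc_zero]
  norm_num

/-! ### The concrete OT matrices -/

lemma key1 (u v : ℝ) : Complex.exp (↑u * Complex.I) * ((Real.sqrt 8 : ℝ) : ℂ)⁻¹ *
    ((starRingEnd ℂ) (Complex.exp (↑v * Complex.I)) * ((Real.sqrt 8 : ℝ) : ℂ)⁻¹)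
    = Complex.exp ((↑u - ↑v) * Complex.I) / 8 := by
  rw [← Complex.exp_conj]
  have h1 : (starRingEnd ℂ) ((v:ℂ) * Complex.I) = -((v:ℂ) * Complex.I) := by
    simp [Complex.conj_ofReal, Complex.conj_I]
  rw [h1]
  have h8 : ((Real.sqrt 8 : ℝ) : ℂ)⁻¹ * ((Real.sqrt 8 : ℝ) : ℂ)⁻¹ = 1/8 := by
    rw [← mul_inv, ← Complex.ofReal_mul, Real.mul_self_sqrt (by norm_num)]
    norm_num
  calc Complex.exp (↑u * Complex.I) * ((Real.sqrt 8 : ℝ) : ℂ)⁻¹ *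
      (Complex.exp (-((v:ℂ) * Complex.I)) * ((Real.sqrt 8 : ℝ) : ℂ)⁻¹)
      = (Complex.exp (↑u * Complex.I) * Complex.exp (-((v:ℂ) * Complex.I))) *
        (((Real.sqrt 8 : ℝ) : ℂ)⁻¹ * ((Real.sqrt 8 : ℝ) : ℂ)⁻¹) := by ring
    _ = Complex.exp ((↑u - ↑v) * Complex.I) / 8 := by
        rw [← Complex.exp_add, h8, show (↑u * Complex.I + -(↑v * Complex.I))
          = ((u:ℂ) - ↑v) * Complex.I by ring]
        ring

def eR : Bool × Bool ≃ Fin 4 where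
  toFun x := match x with
    | (false,false) => 0 | (false,true) => 1 | (true,true) => 2 | (true,false) => 3
  invFun k := ![(false,false),(false,true),(true,true),(true,false)] k
  left_inv := by decide
  right_inv := by decide

def eL : Bool × Bool ≃ Fin 4 where
  toFun x := match x with
    | (false,false) => 0 | (true,false) => 1 | (false,true) => 2 | (true,true) => 3
  invFun k := ![(false,false),(true,false),(false,true),(true,true)] k
  left_inv := by decide
  right_inv := by decide

lemma trRight_eq (θ : (Bool × Bool) × (Bool × Bool) → ℝ) :
    trRight (outer (regEmbed Pot θ)) =
      (Rho (θ ((false,false),(false,false)) - θ ((false,true),(false,false)))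
           (θ ((false,true),(true,true)) - θ ((true,true),(true,true)))
           (θ ((true,true),(false,true)) - θ ((true,false),(false,true)))
           (θ ((true,false),(true,false)) - θ ((false,false),(true,false)))).submatrix eR eR := by
  ext x y
  obtain ⟨x0, x1⟩ := x
  obtain ⟨y0, y1⟩ := y
  cases x0 <;> cases x1 <;> cases y0 <;> cases y1 <;>
  · simp only [trRight, outer, regEmbed, Pot, Fintype.sum_prod_type, Fintype.sum_bool]
    norm_num
    simp only [Matrix.submatrix_apply, eR, Equiv.coe_fn_mk, Rho]
    norm_num [E]
    simp -failIfUnchanged only [Matrix.cons_val]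
    try simp only [key1, sub_self, Complex.ofReal_zero, zero_mul, Complex.exp_zero,
      Complex.ofReal_sub]
    try norm_num

lemma trLeft_eq (θ : (Bool × Bool) × (Bool × Bool) → ℝ) :
    trLeft (outer (regEmbed Pot θ)) =
      (Rho (θ ((false,false),(false,false)) - θ ((false,false),(true,false)))
           (θ ((true,false),(true,false)) - θ ((true,false),(false,true)))
           (θ ((true,true),(false,true)) - θ ((true,true),(true,true)))
           (θ ((false,true),(true,true)) - θ ((false,true),(false,false)))).submatrix eL eL := by
  ext x y
  obtain ⟨x0, x1⟩ := x
  obtain ⟨y0, y1⟩ := y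
  cases x0 <;> cases x1 <;> cases y0 <;> cases y1 <;>
  · simp only [trLeft, outer, regEmbed, Pot, Fintype.sum_prod_type, Fintype.sum_bool]
    norm_num
    simp only [Matrix.submatrix_apply, eL, Equiv.coe_fn_mk, Rho]
    norm_num [E]
    simp -failIfUnchanged only [Matrix.cons_val]
    try simp only [key1, sub_self, Complex.ofReal_zero, zero_mul, Complex.exp_zero,
      Complex.ofReal_sub]
    try norm_num

/-! ### Mutual information of `Pot` -/

lemma mutualInfo_Pot : mutualInfo Pot = 1 := by
  have hX : margX Pot = fun _ => 1/4 := by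
    funext x
    obtain ⟨x0, x1⟩ := x
    cases x0 <;> cases x1 <;>
      simp [margX, Pot, Fintype.sum_prod_type, Fintype.sum_bool] <;> norm_num
  have hY : margY Pot = fun _ => 1/4 := by
    funext y
    obtain ⟨y0, y1⟩ := y
    cases y0 <;> cases y1 <;>
      simp [margY, Pot, Fintype.sum_prod_type, Fintype.sum_bool] <;> norm_num
  have hSX : shannonEntropy (margX Pot) = 2 := by
    rw [hX]
    simp [shannonEntropy, Fintype.sum_prod_type, Fintype.sum_bool, logb_quarter, logb_four]
    try norm_num
  have hSY : shannonEntropy (margY Pot) = 2 := by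
    rw [hY]
    simp [shannonEntropy, Fintype.sum_prod_type, Fintype.sum_bool, logb_quarter, logb_four]
    try norm_num
  have hS : shannonEntropy Pot = 3 := by
    simp [shannonEntropy, Pot, Fintype.sum_prod_type, Fintype.sum_bool, logb_eighth, logb_eight]
    try norm_num
  rw [mutualInfo, hSX, hSY, hS]
  norm_num

/-! ### Main entropy identities -/

lemma vN_trRight (θ : (Bool × Bool) × (Bool × Bool) → ℝ) :
    vonNeumannEntropy (trRight (outer (regEmbed Pot θ))) = shannonEntropy (pvec
      (((θ ((false,false),(false,false)) - θ ((false,true),(false,false)))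
        + (θ ((false,true),(true,true)) - θ ((true,true),(true,true)))
        + (θ ((true,true),(false,true)) - θ ((true,false),(false,true)))
        + (θ ((true,false),(true,false)) - θ ((false,false),(true,false))))/4)) := by
  apply masterSub eR _ _ _ _ _ (by ring) _ (trRight_eq θ)

lemma vN_trLeft (θ : (Bool × Bool) × (Bool × Bool) → ℝ) :
    vonNeumannEntropy (trLeft (outer (regEmbed Pot θ))) = shannonEntropy (pvec
      (((θ ((false,false),(false,false)) - θ ((false,false),(true,false)))
        + (θ ((true,false),(true,false)) - θ ((true,false),(false,true)))
        + (θ ((true,true),(false,true)) - θ ((true,true),(true,true)))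
        + (θ ((false,true),(true,true)) - θ ((false,true),(false,false))))/4)) := by
  apply masterSub eL _ _ _ _ _ (by ring) _ (trLeft_eq θ)

end OTAux

/-- every regular embedding `ψ_θ` of `P^{OT}` satisfies
`S(tr_B|ψ_θ⟩⟨ψ_θ|) ≥ 3/2`, hence has leakage `≥ 1/2`; the canonical embedding
(`θ ≡ 0`) attains `S = 3/2`, so the leakage of `P^{OT}` equals `1/2` and is attained
by the canonical embedding. -/
theorem ot_leakage_one_half :
    (∀ θ : (Bool × Bool) × (Bool × Bool) → ℝ,
      3 / 2 ≤ vonNeumannEntropy (trRight (outer (regEmbed Pot θ))) ∧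
      1 / 2 ≤ regLeakage Pot θ) ∧
    vonNeumannEntropy (trRight (outer (regEmbed Pot 0))) = 3 / 2 ∧
    primLeakage Pot = 1 / 2 ∧ regLeakage Pot 0 = 1 / 2 := by
  have hRight : ∀ θ : (Bool × Bool) × (Bool × Bool) → ℝ,
      3 / 2 ≤ vonNeumannEntropy (trRight (outer (regEmbed Pot θ))) := by
    intro θ
    rw [vN_trRight θ]
    exact pvec_bound _
  have hLeft : ∀ θ : (Bool × Bool) × (Bool × Bool) → ℝ,
      3 / 2 ≤ vonNeumannEntropy (trLeft (outer (regEmbed Pot θ))) := by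
    intro θ
    rw [vN_trLeft θ]
    exact pvec_bound _
  have hLeak : ∀ θ : (Bool × Bool) × (Bool × Bool) → ℝ, 1 / 2 ≤ regLeakage Pot θ := by
    intro θ
    rw [regLeakage, mutualInfo_Pot]
    linarith [hLeft θ]
  have hRight0 : vonNeumannEntropy (trRight (outer (regEmbed Pot 0))) = 3 / 2 := by
    rw [vN_trRight 0]
    simp only [Pi.zero_apply, sub_self, add_zero, zero_add, zero_div]
    exact pvec_zero
  have hLeak0 : regLeakage Pot 0 = 1 / 2 := by
    rw [regLeakage, mutualInfo_Pot, vN_trLeft 0]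
    simp only [Pi.zero_apply, sub_self, add_zero, zero_add, zero_div]
    rw [pvec_zero]
    norm_num
  refine ⟨fun θ => ⟨hRight θ, hLeak θ⟩, hRight0, ?_, hLeak0⟩
  apply le_antisymm
  · calc primLeakage Pot ≤ regLeakage Pot 0 := by
          apply ciInf_le
          refine ⟨1/2, ?_⟩
          rintro x ⟨θ, rfl⟩
          exact hLeak θ
      _ = 1/2 := hLeak0
  · exact le_ciInf hLeak


end
end

section
/- Let r ≥ 1 and let P^{OT^r} be the pmf on ({0,1}^r × {0,1}^r) × ({0,1} × {0,1}^r) defined by P((x₀,x₁),(c,y)) = 2^{−2r−1} if y = x_c and 0 otherwise (randomized 1-out-of-2 string oblivious transfer of r-bit strings). Then every regular embedding of P^{OT^r} has leakage at least Δ_r := −(1/2 + 2^{−(r+1)})·log₂(1/2 + 2^{−(r+1)}) + (2^r − 1)(r+1)·2^{−(r+1)} − r/2, the common leakage of all regular embeddings of the Rabin string OT primitive P^{ROT^r}; in particular the leakage of P^{OT^r} is at least 1 − (r+4)·2^{−(r+1)}. -/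
open scoped BigOperators
open Matrix
open scoped ComplexOrder

noncomputable section

variable {𝒳 𝒴 : Type*} [Fintype 𝒳] [Fintype 𝒴] [DecidableEq 𝒳] [DecidableEq 𝒴]

/-- The randomized 1-out-of-2 string OT primitive `P^{OT^r}` on
`({0,1}^r × {0,1}^r) × ({0,1} × {0,1}^r)`:
`P((x₀,x₁),(c,y)) = 2^{−2r−1}` if `y = x_c` and `0` otherwise. -/
def PotStr (r : ℕ) :
    ((Fin r → Bool) × (Fin r → Bool)) × (Bool × (Fin r → Bool)) → ℝ := fun p =>
  if p.2.2 = (if p.2.1 then p.1.2 else p.1.1) then (2 : ℝ) ^ (-(2 * r + 1 : ℤ)) else 0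

/-- The common leakage `Δ_r` of the regular embeddings of Rabin string OT `P^{ROT^r}`. -/
def rotLeakage (r : ℕ) : ℝ :=
  -(1 / 2 + 2 ^ (-(r + 1 : ℤ))) * Real.logb 2 (1 / 2 + 2 ^ (-(r + 1 : ℤ))) +
    ((2 : ℝ) ^ r - 1) * (r + 1) * 2 ^ (-(r + 1 : ℤ)) - r / 2

/-! ### Auxiliary lemmas -/

section Aux

lemma aux_zn (k : ℕ) : (2:ℝ) ^ (-(k:ℤ)) = ((2:ℝ)^k)⁻¹ := by
  rw [_root_.zpow_neg, zpow_natCast]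

lemma aux_logb_two_zpow (k : ℤ) : Real.logb 2 ((2:ℝ)^k) = k := by
  rw [Real.logb, Real.log_zpow]
  field_simp

lemma aux_card_X (r : ℕ) : Fintype.card (Fin r → Bool) = 2 ^ r := by simp

lemma aux_wq (r : ℕ) : (2:ℝ) ^ (-(2 * (r:ℤ) + 1)) = ((2:ℝ)^(2*r+1:ℕ))⁻¹ := by
  rw [show (-(2 * (r:ℤ) + 1)) = -((2*r+1 : ℕ) : ℤ) by push_cast; ring, aux_zn]

/-- spectral: sum of eigenvalues is the trace -/
lemma aux_sum_eig {n : Type*} [Fintype n] [DecidableEq n] {ρ : Matrix n n ℂ}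
    (h : ρ.IsHermitian) : ∑ i, (h.eigenvalues i : ℂ) = ρ.trace := by
  conv_rhs => rw [h.spectral_theorem, Unitary.conjStarAlgAut_apply]
  rw [Matrix.trace_mul_comm, ← Matrix.mul_assoc]
  simp [Matrix.trace_diagonal]

/-- spectral: sum of squared eigenvalues is the trace of the square -/
lemma aux_sum_eig_sq {n : Type*} [Fintype n] [DecidableEq n] {ρ : Matrix n n ℂ}
    (h : ρ.IsHermitian) : ∑ i, ((h.eigenvalues i : ℂ))^2 = (ρ * ρ).trace := by
  set U : Matrix n n ℂ := (h.eigenvectorUnitary : Matrix n n ℂ) with hU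
  set D : Matrix n n ℂ := Matrix.diagonal (RCLike.ofReal ∘ h.eigenvalues) with hD
  have hst : ρ = U * D * star U := h.spectral_theorem
  have h1 : star U * U = 1 := by
    rw [hU, ← Unitary.coe_star]; exact Unitary.coe_star_mul_self _
  have h2 : ρ * ρ = U * (D * D) * star U := by
    rw [hst]
    rw [Matrix.mul_assoc (U * D) (star U) (U * D * star U),
      ← Matrix.mul_assoc (star U) (U * D) (star U), ← Matrix.mul_assoc (star U) U D, h1]
    noncomm_ring
  rw [h2, Matrix.trace_mul_comm, ← Matrix.mul_assoc, h1, Matrix.one_mul]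
  rw [hD, Matrix.diagonal_mul_diagonal, Matrix.trace_diagonal]
  simp [sq]

/-- entropy is at least the Renyi-2 (collision) entropy -/
lemma aux_entropy_ge_renyi2 {α : Type*} [Fintype α] (p : α → ℝ) (hp : ∀ x, 0 ≤ p x)
    (h1 : ∑ x, p x = 1) {Q : ℝ} (hQ0 : 0 < Q) (hQ : ∑ x, (p x)^2 = Q) :
    - Real.logb 2 Q ≤ shannonEntropy p := by
  have key : ∀ x, p x * Real.log (p x) ≤ p x * Real.log Q - p x + (p x)^2 / Q := by
    intro x
    rcases eq_or_lt_of_le (hp x) with h0 | h0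
    · simp [← h0]
    · have hlog := Real.log_le_sub_one_of_pos (show 0 < p x / Q by positivity)
      rw [Real.log_div (ne_of_gt h0) (ne_of_gt hQ0)] at hlog
      have h2 := mul_le_mul_of_nonneg_left hlog (hp x)
      have e : p x * (p x / Q - 1) = (p x)^2/Q - p x := by field_simp
      nlinarith [h2, e]
  have hsum : ∑ x, p x * Real.log (p x) ≤ Real.log Q := by
    calc ∑ x, p x * Real.log (p x) ≤ ∑ x, (p x * Real.log Q - p x + (p x)^2 / Q) :=
          Finset.sum_le_sum fun x _ => key x
      _ = (∑ x, p x) * Real.log Q - (∑ x, p x) + (∑ x, (p x)^2) / Q := by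
          rw [Finset.sum_add_distrib, Finset.sum_sub_distrib, ← Finset.sum_mul, ← Finset.sum_div]
      _ = Real.log Q := by rw [h1, hQ]; field_simp; ring
  have hlog2 : (0:ℝ) < Real.log 2 := Real.log_pos (by norm_num)
  have hSE : shannonEntropy p = (-∑ x, p x * Real.log (p x)) / Real.log 2 := by
    unfold shannonEntropy
    simp only [Real.logb, ← mul_div_assoc, ← Finset.sum_div, neg_div]
  rw [hSE, Real.logb, neg_div, neg_le_neg_iff, div_le_div_iff_of_pos_right hlog2]
  exact hsum

lemma aux_trLeft_outer_posSemidef {m n : Type*} [Fintype m] [Fintype n] [DecidableEq n]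
    (ψ : m × n → ℂ) : (trLeft (outer ψ)).PosSemidef := by
  have h : trLeft (outer ψ) = (Matrix.of fun (a : m) (i : n) => (starRingEnd ℂ) (ψ (a, i)))ᴴ *
      (Matrix.of fun (a : m) (i : n) => (starRingEnd ℂ) (ψ (a, i))) := by
    ext i j
    simp [trLeft, outer, Matrix.mul_apply, Matrix.conjTranspose_apply, mul_comm]
  rw [h]
  exact Matrix.posSemidef_conjTranspose_mul_self _

lemma aux_regEmbed_mul_conj {𝒳 𝒴 : Type*} (P : 𝒳 × 𝒴 → ℝ) (hP : ∀ p, 0 ≤ P p)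
    (θ : 𝒳 × 𝒴 → ℝ) (p : 𝒳 × 𝒴) :
    regEmbed P θ p * (starRingEnd ℂ) (regEmbed P θ p) = (P p : ℂ) := by
  unfold regEmbed
  rw [_root_.map_mul, ← Complex.exp_conj]
  have h1 : (starRingEnd ℂ) ((θ p : ℂ) * Complex.I) = -((θ p : ℂ) * Complex.I) := by
    simp [Complex.conj_I, Complex.conj_ofReal]
  have h2 : (starRingEnd ℂ) ((Real.sqrt (P p) : ℂ)) = (Real.sqrt (P p) : ℂ) := by
    simp [Complex.conj_ofReal]
  rw [h1, h2]
  have h3 : Complex.exp ((θ p : ℂ) * Complex.I) * Complex.exp (-((θ p : ℂ) * Complex.I)) = 1 := by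
    rw [← Complex.exp_add]; simp
  calc Complex.exp ((θ p : ℂ) * Complex.I) * (Real.sqrt (P p) : ℂ) *
        (Complex.exp (-((θ p : ℂ) * Complex.I)) * (Real.sqrt (P p) : ℂ))
      = (Complex.exp ((θ p : ℂ) * Complex.I) * Complex.exp (-((θ p : ℂ) * Complex.I))) *
        ((Real.sqrt (P p) : ℂ) * (Real.sqrt (P p) : ℂ)) := by ring
    _ = (P p : ℂ) := by
        rw [h3, one_mul, ← Complex.ofReal_mul, Real.mul_self_sqrt (hP p)]

lemma aux_regEmbed_eq_zero {𝒳 𝒴 : Type*} (P : 𝒳 × 𝒴 → ℝ) (θ : 𝒳 × 𝒴 → ℝ) (p : 𝒳 × 𝒴)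
    (h : P p = 0) : regEmbed P θ p = 0 := by
  unfold regEmbed; rw [h]; simp

lemma aux_offdiag_sum {ι : Type*} [Fintype ι] [DecidableEq ι] (g : ι → ℝ) :
    ∑ i, ∑ j, (if i = j then 0 else g i * g j) = (∑ i, g i)^2 - ∑ i, (g i)^2 := by
  have h1 : ∀ i j : ι, (if i = j then (0:ℝ) else g i * g j)
      = g i * g j - (if i = j then g i * g j else 0) := by
    intro i j; by_cases h : i = j <;> simp [h]
  simp only [h1]
  rw [Finset.sum_congr rfl (fun i _ => Finset.sum_sub_distrib _ _)]
  rw [Finset.sum_sub_distrib]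
  congr 1
  · rw [sq, Finset.sum_mul_sum]
  · refine Finset.sum_congr rfl fun i _ => ?_
    rw [Finset.sum_ite_eq]
    simp [sq]

lemma aux_sum4 {ι κ : Type*} [Fintype ι] [Fintype κ] [DecidableEq ι] [DecidableEq κ]
    (f : κ → ι → ℝ) :
    ∑ i, ∑ j, ∑ a, ∑ b, ((if i = j then f a i * f b i else 0)
        + (if a = b ∧ ¬ i = j then f a i * f a j else 0))
      = ∑ i, (∑ a, f a i)^2 + ∑ a : κ, ((∑ i, f a i)^2 - ∑ i, (f a i)^2) := by
  simp only [Finset.sum_add_distrib]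
  congr 1
  · have h1 : ∀ i j : ι, ∑ a : κ, ∑ b : κ, (if i = j then f a i * f b i else 0)
        = (if i = j then (∑ a, f a i) * (∑ b, f b i) else 0) := by
      intro i j
      by_cases h : i = j <;> simp [h, Finset.sum_mul_sum]
    simp only [h1]
    refine Finset.sum_congr rfl fun i _ => ?_
    rw [Finset.sum_ite_eq]
    simp [sq]
  · have h2 : ∀ (i j : ι) (a : κ), ∑ b : κ, (if a = b ∧ ¬ i = j then f a i * f a j else 0)
        = (if i = j then 0 else f a i * f a j) := by
      intro i j a
      by_cases h : i = j
      · simp [h]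
      · simp only [h, not_false_iff, and_true, if_neg h]
        rw [Finset.sum_ite_eq]
        simp
    simp only [h2]
    rw [Finset.sum_congr rfl (fun i _ => Finset.sum_comm)]
    rw [Finset.sum_comm]
    refine Finset.sum_congr rfl fun a _ => ?_
    exact aux_offdiag_sum (f a)

/-! ### Facts about `PotStr` -/

lemma aux_pot_nonneg (r : ℕ) : ∀ p, 0 ≤ PotStr r p := by
  intro p; unfold PotStr; split <;> positivity

lemma aux_margX_pot (r : ℕ) (a : (Fin r → Bool) × (Fin r → Bool)) :
    margX (PotStr r) a = 2 * (2:ℝ) ^ (-(2 * (r:ℤ) + 1)) := by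
  unfold margX PotStr
  rw [Fintype.sum_prod_type]
  simp [Finset.sum_ite_eq, Finset.sum_ite_eq']

lemma aux_margY_pot (r : ℕ) (i : Bool × (Fin r → Bool)) :
    margY (PotStr r) i = (2:ℝ)^(r:ℕ) * (2:ℝ) ^ (-(2 * (r:ℤ) + 1)) := by
  obtain ⟨c, y⟩ := i
  unfold margY PotStr
  rw [Fintype.sum_prod_type]
  cases c <;> simp [Finset.sum_ite_eq, Finset.sum_ite_eq', Finset.sum_comm (γ := Fin r → Bool)]

lemma aux_sum_pot (r : ℕ) : ∑ p, PotStr r p = 1 := by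
  have h : ∑ p, PotStr r p = ∑ a, margX (PotStr r) a := by
    rw [Fintype.sum_prod_type]; rfl
  rw [h]
  simp only [aux_margX_pot]
  rw [Finset.sum_const]
  simp only [Finset.card_univ, Fintype.card_prod, aux_card_X r, smul_eq_mul, aux_wq]
  have h2 : (0:ℝ) < 2^(2*r+1) := by positivity
  field_simp
  ring
  rw [← mul_pow, inv_mul_cancel₀ two_ne_zero, one_pow]

lemma aux_sum_sq_pot (r : ℕ) (a : (Fin r → Bool) × (Fin r → Bool)) :
    ∑ i, (PotStr r (a, i))^2 = 2 * ((2:ℝ) ^ (-(2 * (r:ℤ) + 1)))^2 := by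
  unfold PotStr
  rw [Fintype.sum_prod_type]
  simp [Finset.sum_ite_eq, Finset.sum_ite_eq', ite_pow]

lemma aux_entX (r : ℕ) : shannonEntropy (margX (PotStr r)) = 2 * r := by
  unfold shannonEntropy
  simp only [aux_margX_pot]
  rw [Finset.sum_const]
  have h2 : 2 * (2:ℝ) ^ (-(2 * (r:ℤ) + 1)) = (2:ℝ)^(-(2 * (r:ℤ))) := by
    rw [show (-(2 * (r:ℤ))) = 1 + (-(2 * (r:ℤ) + 1)) by ring, zpow_add₀ (two_ne_zero)]
    norm_num
  rw [h2, aux_logb_two_zpow]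
  simp only [Finset.card_univ, Fintype.card_prod, aux_card_X r, smul_eq_mul]
  rw [show (-(2 * (r:ℤ))) = -((2*r:ℕ):ℤ) by push_cast; ring, aux_zn]
  have h3 : (0:ℝ) < 2^(2*r) := by positivity
  push_cast
  field_simp
  ring
  rw [mul_assoc (r:ℝ), ← mul_pow, inv_mul_cancel₀ two_ne_zero, one_pow, mul_one]

lemma aux_entY (r : ℕ) : shannonEntropy (margY (PotStr r)) = r + 1 := by
  unfold shannonEntropy
  simp only [aux_margY_pot]
  rw [Finset.sum_const]
  have h2 : (2:ℝ)^(r:ℕ) * (2:ℝ) ^ (-(2 * (r:ℤ) + 1)) = (2:ℝ)^(-((r:ℤ) + 1)) := by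
    rw [← zpow_natCast (2:ℝ) r, ← zpow_add₀ (two_ne_zero)]
    ring_nf
  rw [h2, aux_logb_two_zpow]
  simp only [Finset.card_univ, Fintype.card_prod, aux_card_X r, smul_eq_mul, Fintype.card_bool]
  rw [show (-((r:ℤ) + 1)) = -((r+1:ℕ):ℤ) by push_cast; ring, aux_zn]
  have h3 : (0:ℝ) < 2^(r+1) := by positivity
  push_cast
  field_simp
  ring
  rw [mul_assoc (r:ℝ), ← mul_pow, inv_mul_cancel₀ two_ne_zero, one_pow, mul_one]
  ring

lemma aux_entJoint (r : ℕ) : shannonEntropy (PotStr r) = 2 * r + 1 := by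
  unfold shannonEntropy
  have hpt : ∀ p, PotStr r p * Real.logb 2 (PotStr r p)
      = PotStr r p * (-(2 * (r:ℝ) + 1)) := by
    intro p
    unfold PotStr
    by_cases h : p.2.2 = (if p.2.1 then p.1.2 else p.1.1)
    · rw [if_pos h, aux_logb_two_zpow]; push_cast; ring_nf
    · rw [if_neg h]; ring
  simp only [hpt]
  rw [← Finset.sum_mul, aux_sum_pot r]
  ring

lemma aux_mutualInfo_pot (r : ℕ) : mutualInfo (PotStr r) = r := by
  unfold mutualInfo
  rw [aux_entX, aux_entY, aux_entJoint]; ring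

/-- the key pointwise identity used for `tr ρ²` -/
lemma aux_pointQ (r : ℕ) (θ : ((Fin r → Bool) × (Fin r → Bool)) × (Bool × (Fin r → Bool)) → ℝ)
    (a b : (Fin r → Bool) × (Fin r → Bool)) (i j : Bool × (Fin r → Bool)) :
    regEmbed (PotStr r) θ (a, i) * (starRingEnd ℂ) (regEmbed (PotStr r) θ (a, j)) *
      (regEmbed (PotStr r) θ (b, j) * (starRingEnd ℂ) (regEmbed (PotStr r) θ (b, i)))
    = (((if i = j then PotStr r (a, i) * PotStr r (b, i) else 0)
        + (if a = b ∧ ¬ i = j then PotStr r (a, i) * PotStr r (a, j) else 0) : ℝ) : ℂ) := by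
  set ψ := regEmbed (PotStr r) θ with hψ
  have hP := aux_pot_nonneg r
  by_cases hij : i = j
  · subst hij
    have e : ψ (a, i) * (starRingEnd ℂ) (ψ (a, i)) * (ψ (b, i) * (starRingEnd ℂ) (ψ (b, i)))
        = (ψ (a, i) * (starRingEnd ℂ) (ψ (a, i))) * (ψ (b, i) * (starRingEnd ℂ) (ψ (b, i))) := by
      ring
    rw [e, aux_regEmbed_mul_conj _ hP, aux_regEmbed_mul_conj _ hP]
    simp
  · by_cases hab : a = b
    · subst hab
      have e : ψ (a, i) * (starRingEnd ℂ) (ψ (a, j)) * (ψ (a, j) * (starRingEnd ℂ) (ψ (a, i)))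
          = (ψ (a, i) * (starRingEnd ℂ) (ψ (a, i))) * (ψ (a, j) * (starRingEnd ℂ) (ψ (a, j))) := by
        ring
      rw [e, aux_regEmbed_mul_conj _ hP, aux_regEmbed_mul_conj _ hP]
      simp [hij]
    · rw [if_neg hij, if_neg (by tauto)]
      obtain ⟨c, y⟩ := i
      obtain ⟨c', y'⟩ := j
      obtain ⟨a0, a1⟩ := a
      obtain ⟨b0, b1⟩ := b
      by_cases h1 : y = (if c then a1 else a0)
      · by_cases h2 : y' = (if c' then a1 else a0)
        · by_cases h3 : y' = (if c' then b1 else b0)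
          · by_cases h4 : y = (if c then b1 else b0)
            · exfalso
              cases c <;> cases c' <;> simp at h1 h2 h3 h4
              · exact hij (by rw [h1, h2])
              · have e0 : a0 = b0 := by rw [← h1]; exact h4
                have e1 : a1 = b1 := by rw [← h2]; exact h3
                exact hab (by rw [e0, e1])
              · have e0 : a0 = b0 := by rw [← h2]; exact h3
                have e1 : a1 = b1 := by rw [← h1]; exact h4
                exact hab (by rw [e0, e1])
              · exact hij (by rw [h1, h2])
            · have : PotStr r ((b0, b1), (c, y)) = 0 := if_neg h4
              rw [hψ, aux_regEmbed_eq_zero _ _ _ this]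
              simp
          · have : PotStr r ((b0, b1), (c', y')) = 0 := if_neg h3
            rw [hψ, aux_regEmbed_eq_zero _ _ _ this]
            simp
        · have : PotStr r ((a0, a1), (c', y')) = 0 := if_neg h2
          rw [hψ, aux_regEmbed_eq_zero _ _ _ this]
          simp
      · have : PotStr r ((a0, a1), (c, y)) = 0 := if_neg h1
        rw [hψ, aux_regEmbed_eq_zero _ _ _ this]
        simp

lemma aux_trace_rho (r : ℕ) (θ : ((Fin r → Bool) × (Fin r → Bool)) × (Bool × (Fin r → Bool)) → ℝ) :
    (trLeft (outer (regEmbed (PotStr r) θ))).trace = 1 := by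
  have hP := aux_pot_nonneg r
  unfold Matrix.trace
  simp only [Matrix.diag_apply]
  unfold trLeft outer
  simp only [aux_regEmbed_mul_conj _ hP θ]
  rw [Finset.sum_comm]
  have h := aux_sum_pot r
  rw [Fintype.sum_prod_type] at h
  exact_mod_cast h

lemma aux_trace_rho_sq (r : ℕ)
    (θ : ((Fin r → Bool) × (Fin r → Bool)) × (Bool × (Fin r → Bool)) → ℝ) :
    ((trLeft (outer (regEmbed (PotStr r) θ))) * (trLeft (outer (regEmbed (PotStr r) θ)))).trace
      = (((2:ℝ) ^ (-((r:ℤ)+1)) + (2:ℝ) ^ (-(2*(r:ℤ)+1)) : ℝ) : ℂ) := by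
  unfold Matrix.trace
  simp only [Matrix.diag_apply, Matrix.mul_apply]
  unfold trLeft outer
  simp only [Finset.sum_mul_sum]
  simp only [aux_pointQ r θ]
  have hreal : (∑ i, ∑ j, ∑ a, ∑ b,
      ((if i = j then PotStr r (a, i) * PotStr r (b, i) else 0)
        + (if a = b ∧ ¬ i = j then PotStr r (a, i) * PotStr r (a, j) else 0)))
      = (2:ℝ) ^ (-((r:ℤ)+1)) + (2:ℝ) ^ (-(2*(r:ℤ)+1)) := by
    rw [aux_sum4 (fun a i => PotStr r (a, i))]
    have e1 : ∀ i : Bool × (Fin r → Bool), (∑ a, PotStr r (a, i)) = margY (PotStr r) i :=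
      fun _ => rfl
    have e2 : ∀ a, (∑ i, PotStr r (a, i)) = margX (PotStr r) a := fun _ => rfl
    simp only [e1, e2, aux_margY_pot, aux_margX_pot, aux_sum_sq_pot]
    rw [Finset.sum_const, Finset.sum_const]
    simp only [Finset.card_univ, Fintype.card_prod, aux_card_X r, Fintype.card_bool, smul_eq_mul]
    rw [aux_wq, show (-((r:ℤ)+1)) = -((r+1:ℕ):ℤ) by push_cast; ring, aux_zn]
    simp only [nsmul_eq_mul]
    push_cast
    have h2 : (0:ℝ) < 2^(2*r+1) := by positivity
    have h3 : (0:ℝ) < 2^(r+1) := by positivity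
    field_simp
    ring
  exact_mod_cast hreal

end Aux

section Main

lemma aux_eps_facts (r : ℕ) (hr : 1 ≤ r) :
    (0:ℝ) < 2 ^ (-((r:ℤ)+1)) ∧ (2:ℝ) ^ (-((r:ℤ)+1)) ≤ 1/4 := by
  constructor
  · positivity
  · rw [show (-((r:ℤ)+1)) = -((r+1:ℕ):ℤ) by push_cast; ring, aux_zn]
    rw [show (1:ℝ)/4 = ((4:ℝ))⁻¹ by norm_num]
    rw [inv_le_inv₀ (by positivity) (by norm_num)]
    calc (4:ℝ) = 2^2 := by norm_num
      _ ≤ 2^(r+1) := by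
          apply pow_le_pow_right₀ (by norm_num)
          omega

/-- `rotLeakage` in convenient form: `1 - r·ε - (1/2+ε)·L` with `L = logb 2 (1+2ε)`. -/
lemma aux_rot_eq (r : ℕ) :
    rotLeakage r = 1 - r * (2:ℝ) ^ (-((r:ℤ)+1))
      - (1/2 + (2:ℝ) ^ (-((r:ℤ)+1))) * Real.logb 2 (1 + 2 * (2:ℝ) ^ (-((r:ℤ)+1))) := by
  set ε : ℝ := (2:ℝ) ^ (-((r:ℤ)+1)) with hε
  have hε0 : (0:ℝ) < ε := by positivity
  have hrot : rotLeakage r = -(1 / 2 + ε) * Real.logb 2 (1 / 2 + ε)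
      + ((2:ℝ) ^ r - 1) * (r + 1) * ε - r / 2 := by
    unfold rotLeakage
    norm_num [hε]
  have hhalf : (1:ℝ)/2 + ε = (1 + 2*ε)/2 := by ring
  have hlogb : Real.logb 2 (1/2 + ε) = Real.logb 2 (1 + 2*ε) - 1 := by
    rw [hhalf, Real.logb_div (by positivity) (by norm_num), Real.logb_self_eq_one] <;> norm_num
  have hpow : (2:ℝ) ^ r * ε = 1/2 := by
    rw [hε, ← zpow_natCast (2:ℝ) r, ← zpow_add₀ (two_ne_zero)]
    rw [show ((r:ℤ) + -((r:ℤ)+1)) = -1 by ring]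
    norm_num
  rw [hrot, hlogb]
  nlinarith [hpow]

lemma aux_log_ineq (r : ℕ) :
    Real.log (1 + 2 * (2:ℝ) ^ (-((r:ℤ)+1))) ≤ 2 * (2:ℝ) ^ (-((r:ℤ)+1)) := by
  have h := Real.log_le_sub_one_of_pos
    (show (0:ℝ) < 1 + 2 * (2:ℝ) ^ (-((r:ℤ)+1)) by positivity)
  linarith

lemma aux_rot_lb (r : ℕ) (hr : 1 ≤ r) :
    1 - (r + 4) * (2:ℝ) ^ (-((r:ℤ)+1)) ≤ rotLeakage r := by
  obtain ⟨hε0, hε4⟩ := aux_eps_facts r hr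
  set ε : ℝ := (2:ℝ) ^ (-((r:ℤ)+1)) with hε
  rw [aux_rot_eq r]
  have hlog2 : (0.6931471803:ℝ) < Real.log 2 := Real.log_two_gt_d9
  have hlog2' : (0:ℝ) < Real.log 2 := by linarith
  have hLm : Real.logb 2 (1 + 2*ε) * Real.log 2 = Real.log (1 + 2*ε) := by
    rw [Real.logb]; field_simp
  have hL' : Real.logb 2 (1 + 2*ε) * Real.log 2 ≤ 2*ε := by
    rw [hLm]; exact aux_log_ineq r
  have hL0 : 0 ≤ Real.logb 2 (1 + 2*ε) :=
    Real.logb_nonneg (by norm_num) (by nlinarith)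
  have key : (1/2 + ε) * Real.logb 2 (1 + 2*ε) ≤ 4 * ε := by
    nlinarith [mul_le_mul_of_nonneg_left hL' (show (0:ℝ) ≤ 1/2 + ε by linarith),
      mul_nonneg hL0 hε0.le, mul_le_mul_of_nonneg_left hε4 (mul_nonneg hL0 hlog2'.le)]
  nlinarith [key]

lemma aux_main_ineq (r : ℕ) (hr : 1 ≤ r) :
    rotLeakage r ≤ - Real.logb 2 ((2:ℝ) ^ (-((r:ℤ)+1)) + (2:ℝ) ^ (-(2*(r:ℤ)+1))) - r := by
  obtain ⟨hε0, hε4⟩ := aux_eps_facts r hr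
  set ε : ℝ := (2:ℝ) ^ (-((r:ℤ)+1)) with hε
  have hQ : ε + (2:ℝ) ^ (-(2*(r:ℤ)+1)) = ε * (1 + 2*ε) := by
    have h : (2:ℝ) ^ (-(2*(r:ℤ)+1)) = 2 * ε^2 := by
      rw [hε, show (-(2*(r:ℤ)+1)) = -((2*r+1:ℕ):ℤ) by push_cast; ring, aux_zn,
        show (-((r:ℤ)+1)) = -((r+1:ℕ):ℤ) by push_cast; ring, aux_zn]
      have h1 : (0:ℝ) < 2^(2*r+1) := by positivity
      have h2 : (0:ℝ) < 2^(r+1) := by positivity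
      field_simp
      ring
    rw [h]; ring
  have hlogQ : Real.logb 2 (ε * (1 + 2*ε)) = -((r:ℝ)+1) + Real.logb 2 (1 + 2*ε) := by
    rw [Real.logb_mul (ne_of_gt hε0) (by positivity)]
    rw [hε, aux_logb_two_zpow]
    push_cast; ring
  rw [aux_rot_eq r, hQ, hlogQ]
  set L := Real.logb 2 (1 + 2*ε) with hLdef
  -- goal : 1 - r*ε - (1/2+ε)*L ≤ -(-((r:ℝ)+1) + L) - r  i.e. (1/2-ε)*L ≤ r*ε
  have hlog2 : (0.6931471803:ℝ) < Real.log 2 := Real.log_two_gt_d9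
  have hlog2' : (0:ℝ) < Real.log 2 := by linarith
  have hLm : L * Real.log 2 = Real.log (1 + 2*ε) := by
    rw [hLdef, Real.logb]; field_simp
  have hL' : L * Real.log 2 ≤ 2*ε := by
    rw [hLm]; exact aux_log_ineq r
  have hL0 : 0 ≤ L := Real.logb_nonneg (by norm_num) (by nlinarith)
  have hr2 : 1 - 2*ε ≤ r * Real.log 2 := by
    rcases eq_or_lt_of_le hr with h1 | h1
    · have he14 : ε = 1/4 := by
        rw [hε, ← h1, show (-(((1:ℕ):ℤ)+1)) = -((2:ℕ):ℤ) by norm_num, aux_zn]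
        norm_num
      have hr1 : (r:ℝ) = 1 := by rw [← h1]; norm_num
      have h2 : (r:ℝ) * Real.log 2 = Real.log 2 := by rw [hr1, one_mul]
      linarith
    · have h2 : (2:ℝ) ≤ r := by exact_mod_cast h1
      nlinarith
  have key : (1/2 - ε) * L ≤ r * ε := by
    nlinarith [mul_le_mul_of_nonneg_left hL' (show (0:ℝ) ≤ 1/2 - ε by linarith),
      mul_le_mul_of_nonneg_left hr2 hε0.le, mul_nonneg hL0 hlog2'.le,
      mul_nonneg (mul_nonneg hL0 hlog2'.le) hε0.le]
  linarith

/-- the core bound for one regular embedding -/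
lemma aux_reg_bound (r : ℕ) (hr : 1 ≤ r)
    (θ : ((Fin r → Bool) × (Fin r → Bool)) × (Bool × (Fin r → Bool)) → ℝ) :
    rotLeakage r ≤ regLeakage (PotStr r) θ := by
  set ψ := regEmbed (PotStr r) θ with hψ
  have hpsd := aux_trLeft_outer_posSemidef ψ
  have hherm : (trLeft (outer ψ)).IsHermitian := hpsd.1
  set Q : ℝ := (2:ℝ) ^ (-((r:ℤ)+1)) + (2:ℝ) ^ (-(2*(r:ℤ)+1)) with hQdef
  have hQ0 : 0 < Q := by positivity
  have hsum1 : ∑ i, hherm.eigenvalues i = 1 := by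
    have h := aux_sum_eig hherm
    rw [aux_trace_rho r θ] at h
    exact_mod_cast h
  have hsum2 : ∑ i, (hherm.eigenvalues i)^2 = Q := by
    have h := aux_sum_eig_sq hherm
    rw [aux_trace_rho_sq r θ] at h
    exact_mod_cast h
  have hvN : - Real.logb 2 Q ≤ vonNeumannEntropy (trLeft (outer ψ)) := by
    rw [vonNeumannEntropy, dif_pos hherm]
    exact aux_entropy_ge_renyi2 _ (fun i => hpsd.eigenvalues_nonneg i) hsum1 hQ0 hsum2
  have hmi : mutualInfo (PotStr r) = r := aux_mutualInfo_pot r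
  have : regLeakage (PotStr r) θ = vonNeumannEntropy (trLeft (outer ψ)) - r := by
    rw [regLeakage, hmi, hψ]
  rw [this]
  calc rotLeakage r ≤ - Real.logb 2 Q - r := aux_main_ineq r hr
    _ ≤ vonNeumannEntropy (trLeft (outer ψ)) - r := by linarith

end Main

/-- every regular embedding of `P^{OT^r}` has leakage at least `Δ_r`;
in particular the leakage of the primitive `P^{OT^r}` is at least
`1 − (r+4)·2^{−(r+1)}`. -/

theorem string_ot_leakage (r : ℕ) (hr : 1 ≤ r) :
    (∀ θ : ((Fin r → Bool) × (Fin r → Bool)) × (Bool × (Fin r → Bool)) → ℝ,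
      rotLeakage r ≤ regLeakage (PotStr r) θ) ∧
    1 - (r + 4) * 2 ^ (-(r + 1 : ℤ)) ≤ primLeakage (PotStr r) := by
  have key : ∀ θ : ((Fin r → Bool) × (Fin r → Bool)) × (Bool × (Fin r → Bool)) → ℝ,
      rotLeakage r ≤ regLeakage (PotStr r) θ := fun θ => aux_reg_bound r hr θ
  refine ⟨key, ?_⟩
  have h2 : (1:ℝ) - (r + 4) * 2 ^ (-((r:ℤ)+1)) ≤ rotLeakage r := aux_rot_lb r hr
  refine le_trans (by exact_mod_cast h2) (le_ciInf fun θ => key θ)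

end
end
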